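/- Let n ≥ 2 and let ℓ₁,…,ℓₙ be positive reals. Define S_{i,k} := ℓᵢ + ℓᵢ₊₁ + … + ℓ_{i+k-1} (sum of k consecutive terms starting at index i), and for 1 ≤ k ≤ n-1 define L_k := Σ_{i=1}^{n-k} log(S_{i,k+1}²/(S_{i,k}·S_{i+1,k})). Then for integers 1 ≤ a ≤ b ≤ n-1, Σ_{j=a}^{b} L_j ≥ Σ_{i=1}^{n-b} log(S_{i,b+1}²/(S_{i,a}·S_{i+(b-a)+1,a})). -/

import Mathlib

lemma tele_aux (F : ℕ → ℝ) (c : ℕ) :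
    ∑ i ∈ Finset.Icc 1 c, (F (i + 1) - F i) = F (c + 1) - F 1 := by
  induction c with
  | zero => simp
  | succ c ih =>
    rw [Finset.sum_Icc_succ_top (by omega), ih]; ring

lemma log_ratio {x y z : ℝ} (hx : 0 < x) (hy : 0 < y) (hz : 0 < z) :
    Real.log (x ^ 2 / (y * z)) = 2 * Real.log x - Real.log y - Real.log z := by
  rw [Real.log_div (by positivity) (by positivity), Real.log_mul hy.ne' hz.ne',
    Real.log_pow]
  push_cast; ring

lemma tele_step (c d : ℕ) (u v : ℕ → ℝ) (h1 : v (c + 1) ≤ u (c + 1))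
    (h2 : v (1 + d) ≤ u 1) :
    ∑ i ∈ Finset.Icc 1 c, (u i + u (i + 1) - v i - v (i + d + 1))
      ≤ ∑ i ∈ Finset.Icc 1 (c + 1), (2 * u i - v i - v (i + d)) := by
  rw [Finset.sum_Icc_succ_top (by omega)]
  have t1 := tele_aux u c
  have t2 := tele_aux (fun j => v (j + d)) c
  have key : ∑ i ∈ Finset.Icc 1 c, (u i + u (i + 1) - v i - v (i + d + 1))
      - ∑ i ∈ Finset.Icc 1 c, (2 * u i - v i - v (i + d))
      = (u (c + 1) - u 1) - (v (c + 1 + d) - v (1 + d)) := by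
    rw [← Finset.sum_sub_distrib, ← t1, ← t2, ← Finset.sum_sub_distrib]
    apply Finset.sum_congr rfl
    intro i _
    have h : i + 1 + d = i + d + 1 := by omega
    rw [h]; ring
  linarith [key, h1, h2]

theorem stmt_2 (n : ℕ) (hn : 2 ≤ n) (ℓ : ℕ → ℝ) (hpos : ∀ i, 1 ≤ i → i ≤ n → 0 < ℓ i)
    (S : ℕ → ℕ → ℝ) (hS : ∀ i k, S i k = ∑ h ∈ Finset.range k, ℓ (i + h))
    (L : ℕ → ℝ)
    (hL : ∀ k, 1 ≤ k → k ≤ n - 1 →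
      L k = ∑ i ∈ Finset.Icc 1 (n - k), Real.log ((S i (k + 1)) ^ 2 / (S i k * S (i + 1) k)))
    (a b : ℕ) (ha : 1 ≤ a) (hab : a ≤ b) (hb : b ≤ n - 1) :
    ∑ i ∈ Finset.Icc 1 (n - b),
        Real.log ((S i (b + 1)) ^ 2 / (S i a * S (i + (b - a) + 1) a))
      ≤ ∑ j ∈ Finset.Icc a b, L j := by
  have hSpos : ∀ i k, 1 ≤ i → 1 ≤ k → i + k ≤ n + 1 → 0 < S i k := by
    intro i k hi hk hik
    rw [hS]
    apply Finset.sum_pos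
    · intro h hh
      have := Finset.mem_range.mp hh
      exact hpos _ (by omega) (by omega)
    · exact ⟨0, Finset.mem_range.mpr (by omega)⟩
  have hIco : ∀ i k, S i k = ∑ x ∈ Finset.Ico i (i + k), ℓ x := by
    intro i k
    rw [hS, Finset.sum_Ico_eq_sum_range]
    simp
  have hSmono : ∀ i p j q, 1 ≤ i → i ≤ j → j + q ≤ i + p → i + p ≤ n + 1 →
      S j q ≤ S i p := by
    intro i p j q hi hij hjq hip
    rw [hIco, hIco]
    apply Finset.sum_le_sum_of_subset_of_nonneg (Finset.Ico_subset_Ico hij hjq)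
    intro x hx _
    have hx' := Finset.mem_Ico.mp hx
    exact (hpos x (by omega) (by omega)).le
  -- main induction
  suffices H : ∀ b', a ≤ b' → b' ≤ n - 1 →
      ∑ i ∈ Finset.Icc 1 (n - b'),
          Real.log ((S i (b' + 1)) ^ 2 / (S i a * S (i + (b' - a) + 1) a))
        ≤ ∑ j ∈ Finset.Icc a b', L j by
    exact H b hab hb
  intro b' hab'
  induction b', hab' using Nat.le_induction with
  | base =>
    intro hb'
    rw [Finset.Icc_self, Finset.sum_singleton, hL a ha hb']
    apply le_of_eq
    apply Finset.sum_congr rfl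
    intro i _
    have h0 : i + (a - a) + 1 = i + 1 := by omega
    rw [h0]
  | succ b hab' IH =>
    intro hb1
    have hbn : b ≤ n - 1 := by omega
    have IH' := IH hbn
    have hnb : n - b = n - (b + 1) + 1 := by omega
    set c := n - (b + 1) with hcdef
    set d := b + 1 - a with hddef
    set u : ℕ → ℝ := fun i => Real.log (S i (b + 1)) with hu
    set v : ℕ → ℝ := fun i => Real.log (S i a) with hv
    have hcb : c + (b + 1) = n := by omega
    have hda : d + a = b + 1 := by omega
    have E1 : ∑ i ∈ Finset.Icc 1 c,
        Real.log ((S i (b + 1 + 1)) ^ 2 / (S i a * S (i + d + 1) a))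
        = ∑ i ∈ Finset.Icc 1 c,
            ((u i + u (i + 1) - v i - v (i + d + 1))
              + (2 * Real.log (S i (b + 1 + 1)) - u i - u (i + 1))) := by
      apply Finset.sum_congr rfl
      intro i hi
      obtain ⟨hi1, hi2⟩ := Finset.mem_Icc.mp hi
      rw [log_ratio (hSpos i (b + 1 + 1) hi1 (by omega) (by omega))
        (hSpos i a hi1 ha (by omega))
        (hSpos (i + d + 1) a (by omega) ha (by omega))]
      simp only [hu, hv]
      ring
    have E3 : L (b + 1) = ∑ i ∈ Finset.Icc 1 c,
        (2 * Real.log (S i (b + 1 + 1)) - u i - u (i + 1)) := by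
      rw [hL (b + 1) (by omega) hb1, ← hcdef]
      apply Finset.sum_congr rfl
      intro i hi
      obtain ⟨hi1, hi2⟩ := Finset.mem_Icc.mp hi
      rw [log_ratio (hSpos i (b + 1 + 1) hi1 (by omega) (by omega))
        (hSpos i (b + 1) hi1 (by omega) (by omega))
        (hSpos (i + 1) (b + 1) (by omega) (by omega) (by omega))]
    have E2 : ∑ i ∈ Finset.Icc 1 (n - b),
        Real.log ((S i (b + 1)) ^ 2 / (S i a * S (i + (b - a) + 1) a))
        = ∑ i ∈ Finset.Icc 1 (c + 1), (2 * u i - v i - v (i + d)) := by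
      rw [hnb]
      apply Finset.sum_congr rfl
      intro i hi
      obtain ⟨hi1, hi2⟩ := Finset.mem_Icc.mp hi
      have hidx : i + (b - a) + 1 = i + d := by omega
      rw [hidx, log_ratio (hSpos i (b + 1) hi1 (by omega) (by omega))
        (hSpos i a hi1 ha (by omega))
        (hSpos (i + d) a (by omega) ha (by omega))]
    have h1 : v (c + 1) ≤ u (c + 1) := by
      apply Real.log_le_log (hSpos (c + 1) a (by omega) ha (by omega))
      exact hSmono (c + 1) (b + 1) (c + 1) a (by omega) le_rfl (by omega) (by omega)
    have h2 : v (1 + d) ≤ u 1 := by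
      apply Real.log_le_log (hSpos (1 + d) a (by omega) ha (by omega))
      exact hSmono 1 (b + 1) (1 + d) a le_rfl (by omega) (by omega) (by omega)
    calc ∑ i ∈ Finset.Icc 1 (n - (b + 1)),
          Real.log ((S i (b + 1 + 1)) ^ 2 / (S i a * S (i + (b + 1 - a) + 1) a))
        = ∑ i ∈ Finset.Icc 1 c, (u i + u (i + 1) - v i - v (i + d + 1)) + L (b + 1) := by
          rw [E1, Finset.sum_add_distrib, E3]
      _ ≤ ∑ i ∈ Finset.Icc 1 (c + 1), (2 * u i - v i - v (i + d)) + L (b + 1) := by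
          exact add_le_add (tele_step c d u v h1 h2) le_rfl
      _ = ∑ i ∈ Finset.Icc 1 (n - b),
            Real.log ((S i (b + 1)) ^ 2 / (S i a * S (i + (b - a) + 1) a)) + L (b + 1) := by
          rw [E2]
      _ ≤ ∑ j ∈ Finset.Icc a b, L j + L (b + 1) := add_le_add IH' le_rfl
      _ = ∑ j ∈ Finset.Icc a (b + 1), L j := (Finset.sum_Icc_succ_top (by omega) _).symm
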